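/- arXiv:1806.07581 — 2 statements merged into one kernel-verified Lean document; each statement's English description precedes it below -/
import Mathlib

section
/- Suppose the travel-time constraints (3) hold, i.e., for all distinct vertices m, n ∈ V, all times t with 1 ≤ t ≤ T, and all lags τ with 0 ≤ τ ≤ tr(m,n) and t + τ ≤ T, it is not the case that both a(m,t) = 1 and a(n,t+τ) = 1. Then the scheduling plan a admits a corresponding feasible path in the complete graph on V: the set of visit events {(t,m) : a(m,t) = 1} contains at most one vertex per time period, and when its elements are listed in strictly increasing order of time as (t_1,v_1), (t_2,v_2), …, (t_p,v_p), every pair of consecutive events with v_i ≠ v_{i+1} satisfies t_{i+1} − t_i > tr(v_i, v_{i+1}), so the crew has strictly more than the required travel time to move between consecutive visited vertices (Proposition 1). -/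
/-- **Proposition 1.** If the scheduling plan `a` of a repair crew satisfies the
travel-time constraints (3) (for all distinct vertices `m, n`, times `t` with
`1 ≤ t ≤ T`, and lags `τ ≤ tr m n` with `t + τ ≤ T`, not both `a m t = 1` and
`a n (t + τ) = 1`), then the plan admits a corresponding feasible path:
at most one vertex is visited in each time period, and between any two
consecutive visit events `(t, m)` and `(t', n)` (no visit strictly in between)
at distinct vertices, strictly more than the travel time `tr m n` elapses. -/
theorem crew_schedule_admits_feasible_path
    {V : Type*} [Fintype V] (T : ℕ) (a : V → ℕ → ℕ) (tr : V → V → ℕ)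
    (ha : ∀ m t, a m t = 0 ∨ a m t = 1)
    (h3 : ∀ m n : V, m ≠ n → ∀ t τ : ℕ, 1 ≤ t → t ≤ T →
      τ ≤ tr m n → t + τ ≤ T → ¬ (a m t = 1 ∧ a n (t + τ) = 1)) :
    (∀ t : ℕ, 1 ≤ t → t ≤ T → ∀ m n : V, a m t = 1 → a n t = 1 → m = n) ∧
    (∀ t t' : ℕ, ∀ m n : V, 1 ≤ t → t ≤ T → t' ≤ T → t < t' → m ≠ n →
      a m t = 1 → a n t' = 1 →
      (∀ s : ℕ, t < s → s < t' → ∀ v : V, a v s ≠ 1) →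
      tr m n < t' - t) := by
  constructor
  · intro t ht1 htT m n hm hn
    by_contra hne
    exact h3 m n hne t 0 ht1 htT (Nat.zero_le _) (by omega) ⟨hm, by simpa using hn⟩
  · intro t t' m n ht1 htT ht'T htt' hne hm hn _
    by_contra hle
    push_neg at hle
    have := h3 m n hne t (t' - t) ht1 htT hle (by omega)
    exact this ⟨hm, by rwa [Nat.add_sub_cancel' htt'.le]⟩
end

section
/- Suppose the scheduling plan a satisfies the single-visit constraints (1): for every time t with 1 ≤ t ≤ T, ∑_{m ∈ V} a(m,t) ≤ 1. Then the following two families of constraints are equivalent. Family (3): for all distinct m, n ∈ V, all t with 1 ≤ t ≤ T, and all τ with 0 ≤ τ ≤ tr(m,n) and t + τ ≤ T, a(n, t+τ) + a(m, t) ≤ 1. Family (4): for all distinct m, n ∈ V and all t with 1 ≤ t ≤ T, ∑_{τ = t+1}^{min(t + tr(m,n), T)} a(n, τ) ≤ (1 − a(m,t)) · min(tr(m,n), T − t). -/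
/-- Under the single-visit constraints (1) (`∑_{m ∈ V} a m t ≤ 1` for each
time `t` with `1 ≤ t ≤ T`), the family of travel-time constraints (3) is
equivalent to the family of aggregated constraints (4). -/
theorem travel_time_constraints_equiv
    {V : Type*} [Fintype V] [DecidableEq V] (T : ℕ)
    (a : V → ℕ → ℕ) (tr : V → V → ℕ)
    (ha : ∀ m t, a m t = 0 ∨ a m t = 1)
    (h1 : ∀ t : ℕ, 1 ≤ t → t ≤ T → ∑ m : V, a m t ≤ 1) :
    (∀ m n : V, m ≠ n → ∀ t τ : ℕ, 1 ≤ t → t ≤ T →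
        τ ≤ tr m n → t + τ ≤ T → a n (t + τ) + a m t ≤ 1) ↔
    (∀ m n : V, m ≠ n → ∀ t : ℕ, 1 ≤ t → t ≤ T →
        ∑ τ ∈ Finset.Icc (t + 1) (min (t + tr m n) T), a n τ ≤
          (1 - a m t) * min (tr m n) (T - t)) := by
  constructor
  · intro h3 m n hmn t ht1 htT
    rcases ha m t with h0 | h0
    · rw [h0]
      calc ∑ τ ∈ Finset.Icc (t + 1) (min (t + tr m n) T), a n τ
          ≤ ∑ τ ∈ Finset.Icc (t + 1) (min (t + tr m n) T), 1 := by
            apply Finset.sum_le_sum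
            intro i _
            rcases ha n i with h | h <;> omega
        _ = (Finset.Icc (t + 1) (min (t + tr m n) T)).card := by
            simp
        _ ≤ (1 - 0) * min (tr m n) (T - t) := by
            rw [Nat.card_Icc]; omega
    · rw [h0]
      have : ∀ τ ∈ Finset.Icc (t + 1) (min (t + tr m n) T), a n τ = 0 := by
        intro i hi
        simp only [Finset.mem_Icc, le_min_iff] at hi
        have := h3 m n hmn t (i - t) ht1 htT (by omega) (by omega)
        rw [show t + (i - t) = i by omega, h0] at this
        omega
      rw [Finset.sum_eq_zero this]
      omega
  · intro h4 m n hmn t τ ht1 htT hτ htτ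
    rcases Nat.eq_zero_or_pos τ with rfl | hτ1
    · have : a n (t + 0) + a m t ≤ ∑ x : V, a x t := by
        rw [Nat.add_zero]
        have hsub : ({n, m} : Finset V) ⊆ Finset.univ := Finset.subset_univ _
        have := Finset.sum_le_sum_of_subset_of_nonneg hsub
          (fun i _ _ => Nat.zero_le (a i t))
        rwa [Finset.sum_pair hmn.symm] at this
      exact this.trans (h1 t ht1 htT)
    · rcases ha m t with h0 | h0
      · rcases ha n (t + τ) with h | h <;> omega
      · have hsum := h4 m n hmn t ht1 htT
        rw [h0] at hsum
        simp only [Nat.sub_self, Nat.zero_mul, Nat.le_zero] at hsum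
        have hmem : t + τ ∈ Finset.Icc (t + 1) (min (t + tr m n) T) := by
          simp only [Finset.mem_Icc, le_min_iff]; omega
        have := Finset.single_le_sum (f := a n)
          (fun i _ => Nat.zero_le _) hmem
        omega
end
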